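/- Assume n = 3 and all agents have additive cost functions. Every PMMS allocation is (4/3)-MMS. Moreover this bound is tight: there exists a 3-agent instance with additive cost functions, a PMMS allocation A, and an agent i with c_i(A_i) = (4/3)·MMS_i(3,E). -/

import Mathlib

open Finset

/-- `T` is a `k`-partition of the bundle `S`: pairwise disjoint bundles whose union is `S`. -/
def IsPartitionOf {E : Type*} [DecidableEq E] {k : ℕ} (T : Fin k → Finset E) (S : Finset E) :
    Prop :=
  (∀ i j : Fin k, i ≠ j → Disjoint (T i) (T j)) ∧ Finset.univ.biUnion T = S

/-- The maximin share of cost function `c` on `S` among `k` agents: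
the minimum over `k`-partitions of `S` of the maximum cost of a bundle. -/
noncomputable def MMS {E : Type*} [DecidableEq E] (c : Finset E → ℝ) (k : ℕ) (S : Finset E) :
    ℝ :=
  sInf { m : ℝ | ∃ T : Fin k → Finset E, IsPartitionOf T S ∧ m = ⨆ j : Fin k, c (T j) }

/-- `c` is a nonnegative additive cost function. -/
def AdditiveCost {E : Type*} [DecidableEq E] (c : Finset E → ℝ) : Prop :=
  (∀ S : Finset E, 0 ≤ c S) ∧ ∀ S : Finset E, c S = ∑ e ∈ S, c {e}

/-- `c` is a nonnegative monotone cost function with `c ∅ = 0`. -/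
def MonotoneCost {E : Type*} (c : Finset E → ℝ) : Prop :=
  (∀ S : Finset E, 0 ≤ c S) ∧ c ∅ = 0 ∧ ∀ ⦃S T : Finset E⦄, S ⊆ T → c S ≤ c T

/-- `c` is subadditive. -/
def SubadditiveCost {E : Type*} [DecidableEq E] (c : Finset E → ℝ) : Prop :=
  ∀ S T : Finset E, c (S ∪ T) ≤ c S + c T

/-- `c` is submodular. -/
def SubmodularCost {E : Type*} [DecidableEq E] (c : Finset E → ℝ) : Prop :=
  ∀ S T : Finset E, c (S ∪ T) + c (S ∩ T) ≤ c S + c T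

/-- `A` is an allocation of all chores among the `n` agents. -/
def IsAllocation {E : Type*} [DecidableEq E] [Fintype E] {n : ℕ} (A : Fin n → Finset E) : Prop :=
  IsPartitionOf A Finset.univ

/-- `A` is `α`-envy-free. -/
def IsEF {E : Type*} {n : ℕ} (α : ℝ) (c : Fin n → Finset E → ℝ) (A : Fin n → Finset E) : Prop :=
  ∀ i j, c i (A i) ≤ α * c i (A j)

/-- `A` is `α`-envy-free up to one item. -/
def IsEF1 {E : Type*} [DecidableEq E] {n : ℕ} (α : ℝ) (c : Fin n → Finset E → ℝ)
    (A : Fin n → Finset E) : Prop :=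
  ∀ i j, i ≠ j → A i = ∅ ∨ ∃ e ∈ A i, c i (A i \ {e}) ≤ α * c i (A j)

/-- `A` is `α`-envy-free up to any (positive-cost) item. -/
def IsEFX {E : Type*} [DecidableEq E] {n : ℕ} (α : ℝ) (c : Fin n → Finset E → ℝ)
    (A : Fin n → Finset E) : Prop :=
  ∀ i j, i ≠ j → ∀ e ∈ A i, 0 < c i {e} → c i (A i \ {e}) ≤ α * c i (A j)

/-- `A` is an `α`-MMS allocation. -/
def IsMMSFair {E : Type*} [DecidableEq E] [Fintype E] {n : ℕ} (α : ℝ)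
    (c : Fin n → Finset E → ℝ) (A : Fin n → Finset E) : Prop :=
  ∀ i, c i (A i) ≤ α * MMS (c i) n Finset.univ

/-- `A` is an `α`-PMMS allocation. -/
def IsPMMS {E : Type*} [DecidableEq E] {n : ℕ} (α : ℝ)
    (c : Fin n → Finset E → ℝ) (A : Fin n → Finset E) : Prop :=
  ∀ i j, i ≠ j → c i (A i) ≤ α * MMS (c i) 2 (A i ∪ A j)

/-- The optimal (minimum) social cost over all allocations. -/
noncomputable def OPT {E : Type*} [DecidableEq E] [Fintype E] {n : ℕ}
    (c : Fin n → Finset E → ℝ) : ℝ :=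
  sInf { s : ℝ | ∃ A : Fin n → Finset E, IsAllocation A ∧ s = ∑ i, c i (A i) }

section Helpers

variable {E : Type*} [DecidableEq E] {c : Finset E → ℝ}

lemma AdditiveCost.mono (h : AdditiveCost c) {S T : Finset E} (hST : S ⊆ T) : c S ≤ c T := by
  rw [h.2 S, h.2 T]
  exact Finset.sum_le_sum_of_subset_of_nonneg hST (fun e _ _ => h.1 {e})

lemma AdditiveCost.union' (h : AdditiveCost c) {S T : Finset E} (hd : Disjoint S T) :
    c (S ∪ T) = c S + c T := by
  rw [h.2 (S ∪ T), h.2 S, h.2 T, Finset.sum_union hd]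

lemma AdditiveCost.sdiff' (h : AdditiveCost c) {S C : Finset E} (hC : C ⊆ S) :
    c (S \ C) = c S - c C := by
  have h1 : c (C ∪ S \ C) = c C + c (S \ C) := h.union' disjoint_sdiff
  rw [Finset.union_sdiff_of_subset hC] at h1
  linarith

lemma AdditiveCost.partition_sum (h : AdditiveCost c) {k : ℕ} {T : Fin k → Finset E}
    {S : Finset E} (hT : IsPartitionOf T S) : ∑ l, c (T l) = c S := by
  have hd : ((Finset.univ : Finset (Fin k)) : Set (Fin k)).PairwiseDisjoint T :=
    fun a _ b _ hab => hT.1 a b hab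
  calc ∑ l, c (T l) = ∑ l, ∑ e ∈ T l, c {e} := by
        exact Finset.sum_congr rfl fun l _ => h.2 (T l)
    _ = ∑ e ∈ Finset.univ.biUnion T, c {e} := (Finset.sum_biUnion hd).symm
    _ = c S := by rw [hT.2, ← h.2]

lemma trivialPartition {k : ℕ} [NeZero k] (S : Finset E) :
    IsPartitionOf (fun l : Fin k => if l = 0 then S else ∅) S := by
  constructor
  · intro i j hij
    dsimp only
    split_ifs <;> simp_all
  · ext a
    simp only [Finset.mem_biUnion, Finset.mem_univ, true_and]
    constructor
    · rintro ⟨l, hl⟩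
      split_ifs at hl with h
      · exact hl
      · simp at hl
    · intro ha; exact ⟨0, by simp [ha]⟩

lemma sup_nonneg' {k : ℕ} [NeZero k] (hc : ∀ S : Finset E, 0 ≤ c S) (T : Fin k → Finset E) :
    0 ≤ ⨆ j, c (T j) :=
  (hc (T 0)).trans (le_ciSup (f := fun j => c (T j)) (Set.finite_range _).bddAbove 0)

lemma mmsSet_nonempty (c : Finset E → ℝ) {k : ℕ} [NeZero k] (S : Finset E) :
    {m : ℝ | ∃ T : Fin k → Finset E, IsPartitionOf T S ∧ m = ⨆ j : Fin k, c (T j)}.Nonempty :=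
  ⟨_, _, trivialPartition S, rfl⟩

lemma mmsSet_bddBelow (hc : ∀ S : Finset E, 0 ≤ c S) {k : ℕ} [NeZero k] (S : Finset E) :
    BddBelow {m : ℝ | ∃ T : Fin k → Finset E, IsPartitionOf T S ∧ m = ⨆ j : Fin k, c (T j)} := by
  refine ⟨0, ?_⟩
  rintro m ⟨T, hT, rfl⟩
  exact sup_nonneg' hc T

lemma MMS_nonneg (hc : ∀ S : Finset E, 0 ≤ c S) {k : ℕ} [NeZero k] (S : Finset E) :
    0 ≤ MMS c k S :=
  le_csInf (mmsSet_nonempty c S) (by rintro m ⟨T, hT, rfl⟩; exact sup_nonneg' hc T)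

lemma MMS_le_pair (h : AdditiveCost c) {S C : Finset E} (hC : C ⊆ S) :
    MMS c 2 S ≤ max (c C) (c (S \ C)) := by
  have hpart : IsPartitionOf (![C, S \ C]) S := by
    constructor
    · intro i j hij
      fin_cases i <;> fin_cases j <;>
        simp_all [disjoint_sdiff, Finset.sdiff_disjoint]
    · ext a
      simp only [Finset.mem_biUnion, Finset.mem_univ, true_and, Fin.exists_fin_two]
      simp only [Matrix.cons_val_zero, Matrix.cons_val_one, Matrix.head_cons]
      rw [← Finset.mem_union, Finset.union_sdiff_of_subset hC]
  have h1 : MMS c 2 S ≤ ⨆ j, c ((![C, S \ C] : Fin 2 → Finset E) j) :=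
    csInf_le (mmsSet_bddBelow h.1 S) ⟨_, hpart, rfl⟩
  refine h1.trans (ciSup_le fun j => ?_)
  fin_cases j
  · exact le_max_left _ _
  · exact le_max_right _ _

lemma partition_inter {k : ℕ} {T : Fin k → Finset E} {S : Finset E}
    (hT : IsPartitionOf T S) (B : Finset E) :
    IsPartitionOf (fun l => T l ∩ B) (S ∩ B) := by
  constructor
  · intro a b hab
    exact (hT.1 a b hab).mono Finset.inter_subset_left Finset.inter_subset_left
  · ext a
    simp only [Finset.mem_biUnion, Finset.mem_univ, true_and, Finset.mem_inter]
    have : (∃ l, a ∈ T l) ↔ a ∈ S := by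
      rw [← hT.2]; simp
    rw [exists_and_right, this]

lemma MMS_attained [Fintype E] (hc : ∀ S : Finset E, 0 ≤ c S) {k : ℕ} [NeZero k] (S : Finset E) :
    ∃ T : Fin k → Finset E, IsPartitionOf T S ∧ ∀ l, c (T l) ≤ MMS c k S := by
  have hfin : {m : ℝ | ∃ T : Fin k → Finset E, IsPartitionOf T S ∧
      m = ⨆ j : Fin k, c (T j)}.Finite := by
    have heq : {m : ℝ | ∃ T : Fin k → Finset E, IsPartitionOf T S ∧ m = ⨆ j : Fin k, c (T j)}
        = (fun T : Fin k → Finset E => ⨆ j, c (T j)) '' {T | IsPartitionOf T S} := by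
      ext m
      simp only [Set.mem_setOf_eq, Set.mem_image, eq_comm]
    rw [heq]
    exact Set.Finite.image _ (Set.toFinite _)
  have hmem := (mmsSet_nonempty c S (k := k)).csInf_mem hfin
  obtain ⟨T, hT, heq⟩ := hmem
  refine ⟨T, hT, fun l => ?_⟩
  have : c (T l) ≤ ⨆ j, c (T j) := le_ciSup (f := fun j => c (T j)) (Set.finite_range _).bddAbove l
  exact this.trans (le_of_eq heq.symm)

lemma MMS2_ge (h : AdditiveCost c) {S : Finset E} {b : ℝ}
    (hgap : ∀ C ⊆ S, b ≤ c C ∨ c C ≤ c S - b) : b ≤ MMS c 2 S := by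
  refine le_csInf (mmsSet_nonempty c S) ?_
  rintro m ⟨T, hT, rfl⟩
  have hsub : T 0 ⊆ S := by
    rw [← hT.2]; exact Finset.subset_biUnion_of_mem T (Finset.mem_univ 0)
  have hsum : c (T 0) + c (T 1) = c S := by
    have := h.partition_sum hT
    rwa [Fin.sum_univ_two] at this
  have h0 : c (T 0) ≤ ⨆ j, c (T j) := le_ciSup (f := fun j => c (T j)) (Set.finite_range _).bddAbove 0
  have h1 : c (T 1) ≤ ⨆ j, c (T j) := le_ciSup (f := fun j => c (T j)) (Set.finite_range _).bddAbove 1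
  rcases hgap (T 0) hsub with hb | hb
  · linarith
  · linarith

end Helpers

lemma part1 (E : Type) [DecidableEq E] [Fintype E]
    (c : Fin 3 → Finset E → ℝ) (hadd : ∀ i, AdditiveCost (c i))
    (A : Fin 3 → Finset E) (hA : IsAllocation A) (hP : IsPMMS 1 c A) :
    IsMMSFair (4 / 3) c A := by
  intro i
  obtain ⟨j, k, hij, hik, hjk, huniv⟩ : ∃ j k : Fin 3, i ≠ j ∧ i ≠ k ∧ j ≠ k ∧
      ({i, j, k} : Finset (Fin 3)) = Finset.univ := by
    fin_cases i
    · exact ⟨1, 2, by decide, by decide, by decide, by decide⟩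
    · exact ⟨0, 2, by decide, by decide, by decide, by decide⟩
    · exact ⟨0, 1, by decide, by decide, by decide, by decide⟩
  have hai := hadd i
  set μ := MMS (c i) 3 Finset.univ with hμdef
  have hμ0 : 0 ≤ μ := MMS_nonneg hai.1 _
  obtain ⟨T, hT, hTle⟩ := MMS_attained (c := c i) hai.1 (k := 3) Finset.univ
  -- total cost
  have hsumA : c i (A i) + c i (A j) + c i (A k) = c i Finset.univ := by
    have h1 := hai.partition_sum hA
    rw [show (Finset.univ : Finset (Fin 3)) = {i, j, k} from huniv.symm] at h1
    rw [Finset.sum_insert (by simp [hij, hik]), Finset.sum_insert (by simp [hjk]),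
      Finset.sum_singleton] at h1
    linarith
  have hTsum : c i Finset.univ ≤ 3 * μ := by
    have h2 := hai.partition_sum hT
    rw [Fin.sum_univ_three] at h2
    have := hTle 0; have := hTle 1; have := hTle 2
    linarith
  have hdij : Disjoint (A i) (A j) := hA.1 i j hij
  have hdik : Disjoint (A i) (A k) := hA.1 i k hik
  have hdjk : Disjoint (A j) (A k) := hA.1 j k hjk
  have hSxy : c i (A i ∪ A j) = c i (A i) + c i (A j) := hai.union' hdij
  have hSxz : c i (A i ∪ A k) = c i (A i) + c i (A k) := hai.union' hdik
  have hPj : c i (A i) ≤ MMS (c i) 2 (A i ∪ A j) := by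
    have := hP i j hij; linarith
  have hPk : c i (A i) ≤ MMS (c i) 2 (A i ∪ A k) := by
    have := hP i k hik; linarith
  have gap : ∀ (B : Finset E), Disjoint (A i) B →
      c i (A i) ≤ MMS (c i) 2 (A i ∪ B) →
      ∀ C ⊆ A i ∪ B, c i C < c i (A i) → c i C ≤ c i B := by
    intro B hd hple C hC hlt
    have h1 := hple.trans (MMS_le_pair hai hC)
    rcases le_max_iff.mp h1 with h | h
    · linarith
    · have h2 := hai.sdiff' hC
      have h3 := hai.union' hd
      linarith
  have gapj := gap (A j) hdij hPj
  have gapk := gap (A k) hdik hPk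
  set x := c i (A i) with hxdef
  by_cases hxμ : x ≤ μ
  · linarith
  push_neg at hxμ
  set t := fun l => c i (T l ∩ A i) with htdef
  set u := fun l => c i (T l ∩ A j) with hudef
  set v := fun l => c i (T l ∩ A k) with hvdef
  have hpartsum : ∀ B : Finset E, (∑ l, c i (T l ∩ B)) = c i B := by
    intro B
    have := hai.partition_sum (partition_inter hT B)
    rwa [Finset.univ_inter] at this
  have ht_sum : t 0 + t 1 + t 2 = x := by
    have := hpartsum (A i); rw [Fin.sum_univ_three] at this; exact this
  have hu_sum : u 0 + u 1 + u 2 = c i (A j) := by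
    have := hpartsum (A j); rw [Fin.sum_univ_three] at this; exact this
  have hv_sum : v 0 + v 1 + v 2 = c i (A k) := by
    have := hpartsum (A k); rw [Fin.sum_univ_three] at this; exact this
  have hcell : ∀ (l : Fin 3) (B : Finset E), c i (T l ∩ B) ≤ μ :=
    fun l B => (hai.mono Finset.inter_subset_left).trans (hTle l)
  have hcell2 : ∀ (l : Fin 3) (B B' : Finset E), Disjoint B B' →
      c i (T l ∩ (B ∪ B')) = c i (T l ∩ B) + c i (T l ∩ B') := by
    intro l B B' hd
    rw [Finset.inter_union_distrib_left]
    exact hai.union' (hd.mono Finset.inter_subset_right Finset.inter_subset_right)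
  have htu : ∀ l, t l + u l ≤ c i (A j) := by
    intro l
    have h1 : c i (T l ∩ (A i ∪ A j)) < x := lt_of_le_of_lt (hcell l _) hxμ
    have h2 := gapj _ Finset.inter_subset_right h1
    rw [hcell2 l _ _ hdij] at h2
    exact h2
  have htv : ∀ l, t l + v l ≤ c i (A k) := by
    intro l
    have h1 : c i (T l ∩ (A i ∪ A k)) < x := lt_of_le_of_lt (hcell l _) hxμ
    have h2 := gapk _ Finset.inter_subset_right h1
    rw [hcell2 l _ _ hdik] at h2
    exact h2
  show x ≤ 4 / 3 * μ
  by_cases hzero : ∃ l, t l = 0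
  · obtain ⟨l₀, hl₀⟩ := hzero
    have huv : u l₀ + v l₀ ≤ μ := by
      have h1 := hcell l₀ (A j ∪ A k)
      rw [hcell2 l₀ _ _ hdjk] at h1
      exact h1
    have h0 := htu 0; have h1 := htu 1; have h2 := htu 2
    have h3 := htv 0; have h4 := htv 1; have h5 := htv 2
    have hcases : (t 0 = 0 ∧ u 0 + v 0 ≤ μ) ∨ (t 1 = 0 ∧ u 1 + v 1 ≤ μ) ∨
        (t 2 = 0 ∧ u 2 + v 2 ≤ μ) := by
      fin_cases l₀
      · exact Or.inl ⟨hl₀, huv⟩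
      · exact Or.inr (Or.inl ⟨hl₀, huv⟩)
      · exact Or.inr (Or.inr ⟨hl₀, huv⟩)
    rcases hcases with ⟨e1, e2⟩ | ⟨e1, e2⟩ | ⟨e1, e2⟩ <;> linarith
  · push_neg at hzero
    have hpos : ∀ l, 0 < t l := fun l => lt_of_le_of_ne (hai.1 _) (Ne.symm (hzero l))
    have key : ∀ (B : Finset E), Disjoint (A i) B →
        (∀ C ⊆ A i ∪ B, c i C < x → c i C ≤ c i B) →
        ∀ l, x ≤ c i B + t l := by
      intro B hd hgap l
      have hsub : A i \ (T l ∩ A i) ⊆ A i ∪ B :=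
        Finset.sdiff_subset.trans Finset.subset_union_left
      have hCc : c i (A i \ (T l ∩ A i)) = x - t l :=
        hai.sdiff' Finset.inter_subset_right
      have hlt : c i (A i \ (T l ∩ A i)) < x := by
        rw [hCc]; linarith [hpos l]
      have := hgap _ hsub hlt
      rw [hCc] at this
      linarith
    have ky := key (A j) hdij gapj
    have kz := key (A k) hdik gapk
    have ky0 := ky 0; have ky1 := ky 1; have ky2 := ky 2
    have kz0 := kz 0; have kz1 := kz 1; have kz2 := kz 2
    linarith

/-- Weights for the tight example: items 0,1,2 cost 2 and items 3,4,5 cost 1 (for agent 0). -/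
def w6 : Fin 6 → ℕ := ![2, 2, 2, 1, 1, 1]

/-- Agent-0 cost function in the tight example. -/
noncomputable def c0 : Finset (Fin 6) → ℝ := fun S => ((∑ e ∈ S, w6 e : ℕ) : ℝ)

lemma c0_add : AdditiveCost c0 := by
  constructor
  · intro S; exact Nat.cast_nonneg _
  · intro S
    unfold c0
    rw [Nat.cast_sum]
    exact Finset.sum_congr rfl fun e _ => by simp

lemma zero_add' : AdditiveCost (fun _ : Finset (Fin 6) => (0 : ℝ)) :=
  ⟨fun _ => le_refl 0, fun S => by simp⟩

/-- The example cost profile: agent 0 has `c0`, agents 1 and 2 value everything at 0. -/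
noncomputable def cex : Fin 3 → Finset (Fin 6) → ℝ := ![c0, fun _ => 0, fun _ => 0]

/-- The example allocation. -/
def Aex : Fin 3 → Finset (Fin 6) := ![{0, 1}, {2}, {3, 4, 5}]

lemma c0_val (S : Finset (Fin 6)) (n : ℕ) (h : (∑ e ∈ S, w6 e) = n) : c0 S = n := by
  unfold c0; rw [h]

lemma Aex_alloc : IsAllocation Aex := by
  constructor
  · intro i j hij
    fin_cases i <;> fin_cases j <;> simp_all <;> decide
  · decide

lemma sum123 : ∀ C ⊆ ({0, 1, 2} : Finset (Fin 6)), (∑ e ∈ C, w6 e) = 2 * C.card := by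
  intro C hC
  rw [Finset.sum_congr rfl fun e he => show w6 e = 2 by
    have := hC he; fin_cases this <;> rfl]
  rw [Finset.sum_const, smul_eq_mul, mul_comm]

lemma gap123 : ∀ C ⊆ ({0, 1, 2} : Finset (Fin 6)), (4 : ℝ) ≤ c0 C ∨ c0 C ≤ c0 {0, 1, 2} - 4 := by
  intro C hC
  have h1 := sum123 C hC
  have hS : c0 ({0, 1, 2} : Finset (Fin 6)) = 6 := c0_val _ 6 (by decide)
  have hcard : C.card ≤ 3 := by
    calc C.card ≤ ({0,1,2} : Finset (Fin 6)).card := Finset.card_le_card hC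
      _ = 3 := by decide
  have hval : c0 C = 2 * C.card := by
    rw [c0_val C _ h1]; push_cast; ring
  rcases Nat.lt_or_ge C.card 2 with h | h
  · right
    rw [hval, hS]
    have : (C.card : ℝ) ≤ 1 := by exact_mod_cast Nat.lt_succ_iff.mp h
    linarith
  · left
    rw [hval]
    have : (2 : ℝ) ≤ (C.card : ℝ) := by exact_mod_cast h
    linarith

lemma gap01345 : ∀ C ⊆ ({0, 1, 3, 4, 5} : Finset (Fin 6)),
    (4 : ℝ) ≤ c0 C ∨ c0 C ≤ c0 {0, 1, 3, 4, 5} - 4 := by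
  intro C _
  have hS : c0 ({0, 1, 3, 4, 5} : Finset (Fin 6)) = 7 := c0_val _ 7 (by decide)
  rcases Nat.lt_or_ge (∑ e ∈ C, w6 e) 4 with h | h
  · right
    rw [hS, c0_val C _ rfl]
    have : ((∑ e ∈ C, w6 e : ℕ) : ℝ) ≤ 3 := by exact_mod_cast Nat.lt_succ_iff.mp h
    linarith
  · left
    rw [c0_val C _ rfl]
    exact_mod_cast h

lemma MMS3_eq : MMS c0 3 Finset.univ = 3 := by
  apply le_antisymm
  · -- exhibit the partition {0,3},{1,4},{2,5}
    have hpart : IsPartitionOf (![{0, 3}, {1, 4}, {2, 5}] : Fin 3 → Finset (Fin 6))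
        Finset.univ := by
      constructor
      · intro i j hij
        fin_cases i <;> fin_cases j <;> simp_all <;> decide
      · decide
    have hval : (fun j : Fin 3 => c0 ((![{0, 3}, {1, 4}, {2, 5}] : Fin 3 → Finset (Fin 6)) j))
        = fun _ => (3 : ℝ) := by
      funext j
      fin_cases j <;> exact c0_val _ 3 (by decide)
    refine csInf_le (mmsSet_bddBelow c0_add.1 _) ⟨_, hpart, ?_⟩
    rw [hval, ciSup_const]
  · refine le_csInf (mmsSet_nonempty c0 _) ?_
    rintro m ⟨T, hT, rfl⟩
    have hsum : c0 (T 0) + c0 (T 1) + c0 (T 2) = 9 := by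
      have := c0_add.partition_sum hT
      rw [Fin.sum_univ_three] at this
      rw [this]
      exact c0_val _ 9 (by decide)
    have h0 : c0 (T 0) ≤ ⨆ j, c0 (T j) :=
      le_ciSup (f := fun j => c0 (T j)) (Set.finite_range _).bddAbove 0
    have h1 : c0 (T 1) ≤ ⨆ j, c0 (T j) :=
      le_ciSup (f := fun j => c0 (T j)) (Set.finite_range _).bddAbove 1
    have h2 : c0 (T 2) ≤ ⨆ j, c0 (T j) :=
      le_ciSup (f := fun j => c0 (T j)) (Set.finite_range _).bddAbove 2
    linarith

lemma pmms_ex : IsPMMS 1 cex Aex := by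
  intro i j hij
  by_cases hi : i = 0
  · subst hi
    fin_cases j
    · exact absurd rfl hij
    · show c0 {0, 1} ≤ 1 * MMS c0 2 ({0, 1} ∪ {2})
      rw [one_mul, show ({0, 1} : Finset (Fin 6)) ∪ {2} = {0, 1, 2} from by decide]
      have h4 := MMS2_ge c0_add gap123
      have hv : c0 {0, 1} = 4 := c0_val _ 4 (by decide)
      linarith
    · show c0 {0, 1} ≤ 1 * MMS c0 2 ({0, 1} ∪ {3, 4, 5})
      rw [one_mul, show ({0, 1} : Finset (Fin 6)) ∪ {3, 4, 5} = {0, 1, 3, 4, 5} from by decide]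
      have h4 := MMS2_ge c0_add gap01345
      have hv : c0 {0, 1} = 4 := c0_val _ 4 (by decide)
      linarith
  · have hz : cex i = fun _ => 0 := by
      fin_cases i
      · exact absurd rfl hi
      · rfl
      · rfl
    rw [hz, one_mul]
    exact MMS_nonneg (fun _ => le_refl 0) _

lemma part2 : ∃ (m : ℕ) (c : Fin 3 → Finset (Fin m) → ℝ) (A : Fin 3 → Finset (Fin m)),
    (∀ i, AdditiveCost (c i)) ∧ IsAllocation A ∧ IsPMMS 1 c A ∧
    ∃ i, c i (A i) = (4 / 3) * MMS (c i) 3 Finset.univ := by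
  refine ⟨6, cex, Aex, ?_, Aex_alloc, pmms_ex, 0, ?_⟩
  · intro i
    fin_cases i
    · exact c0_add
    · exact zero_add'
    · exact zero_add'
  · show cex 0 (Aex 0) = 4 / 3 * MMS (cex 0) 3 Finset.univ
    have h1 : cex 0 = c0 := rfl
    have h2 : Aex 0 = {0, 1} := rfl
    rw [h1, h2, MMS3_eq, c0_val _ 4 (by decide)]
    norm_num


/-- Proposition 5.4 (n = 3): with additive cost functions, every PMMS allocation among
three agents is `4/3`-MMS, and this bound is tight. -/
theorem PMMS_is_fourThirds_MMS_three_agents :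
    (∀ (E : Type) [DecidableEq E] [Fintype E]
      (c : Fin 3 → Finset E → ℝ), (∀ i, AdditiveCost (c i)) →
      ∀ A : Fin 3 → Finset E, IsAllocation A → IsPMMS 1 c A →
        IsMMSFair (4 / 3) c A) ∧
    (∃ (m : ℕ) (c : Fin 3 → Finset (Fin m) → ℝ) (A : Fin 3 → Finset (Fin m)),
      (∀ i, AdditiveCost (c i)) ∧ IsAllocation A ∧ IsPMMS 1 c A ∧
      ∃ i, c i (A i) = (4 / 3) * MMS (c i) 3 Finset.univ) :=
  ⟨part1, part2⟩
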